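/- Weak normalization of the simply typed λ-calculus with products and sums: every well-typed term reduces in finitely many steps—using β-reduction for functions, projection reductions for pairs, case reductions for injections, and permutation of case eliminations—to a normal form (a term admitting none of these reductions). -/

import Mathlib

/-- Simple types: base, function, product and sum types. -/
inductive Ty : Type
  | base : Ty
  | arrow : Ty → Ty → Ty
  | prod : Ty → Ty → Ty
  | sum : Ty → Ty → Ty

/-- Terms of the simply typed λ-calculus with products and sums (de Bruijn indices;
`inl B t` and `inr A t` carry the other summand as annotation). -/
inductive Tm : Type
  | var : ℕ → Tm
  | lam : Ty → Tm → Tm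
  | app : Tm → Tm → Tm
  | pair : Tm → Tm → Tm
  | proj : Bool → Tm → Tm
  | inl : Ty → Tm → Tm
  | inr : Ty → Tm → Tm
  | case : Tm → Tm → Tm → Tm

/-- Shift free de Bruijn variables `≥ c` up by one. -/
def shift (c : ℕ) : Tm → Tm
  | .var n => if n < c then .var n else .var (n + 1)
  | .lam A t => .lam A (shift (c + 1) t)
  | .app t u => .app (shift c t) (shift c u)
  | .pair t u => .pair (shift c t) (shift c u)
  | .proj b t => .proj b (shift c t)
  | .inl B t => .inl B (shift c t)
  | .inr A t => .inr A (shift c t)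
  | .case t u v => .case (shift c t) (shift (c + 1) u) (shift (c + 1) v)

/-- Capture-avoiding substitution of `s` for the variable `k`. -/
def subst (k : ℕ) (s : Tm) : Tm → Tm
  | .var n => if n < k then .var n else if n = k then s else .var (n - 1)
  | .lam A t => .lam A (subst (k + 1) (shift 0 s) t)
  | .app t u => .app (subst k s t) (subst k s u)
  | .pair t u => .pair (subst k s t) (subst k s u)
  | .proj b t => .proj b (subst k s t)
  | .inl B t => .inl B (subst k s t)
  | .inr A t => .inr A (subst k s t)
  | .case t u v => .case (subst k s t) (subst (k + 1) (shift 0 s) u) (subst (k + 1) (shift 0 s) v)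

/-- Standard typing judgment `Γ ⊢ t : A`. -/
inductive HasTy : List Ty → Tm → Ty → Prop
  | var {Γ n A} : Γ[n]? = some A → HasTy Γ (.var n) A
  | lam {Γ A B t} : HasTy (A :: Γ) t B → HasTy Γ (.lam A t) (Ty.arrow A B)
  | app {Γ A B t u} : HasTy Γ t (Ty.arrow A B) → HasTy Γ u A → HasTy Γ (.app t u) B
  | pair {Γ A B t u} : HasTy Γ t A → HasTy Γ u B → HasTy Γ (.pair t u) (Ty.prod A B)
  | projL {Γ A B t} : HasTy Γ t (Ty.prod A B) → HasTy Γ (.proj false t) A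
  | projR {Γ A B t} : HasTy Γ t (Ty.prod A B) → HasTy Γ (.proj true t) B
  | inl {Γ A B t} : HasTy Γ t A → HasTy Γ (.inl B t) (Ty.sum A B)
  | inr {Γ A B t} : HasTy Γ t B → HasTy Γ (.inr A t) (Ty.sum A B)
  | case {Γ A B C t u v} : HasTy Γ t (Ty.sum A B) → HasTy (A :: Γ) u C →
      HasTy (B :: Γ) v C → HasTy Γ (.case t u v) C


/-- One-step reduction: β-reduction, projection reductions, case reductions and
permutations of case eliminations (pushing a single elimination — an applied
argument, a projection, or another case — into both branches of a case),
applied at any position in a term. -/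
inductive Step : Tm → Tm → Prop
  | beta {A t u} : Step (.app (.lam A t) u) (subst 0 u t)
  | projPairL {u v} : Step (.proj false (.pair u v)) u
  | projPairR {u v} : Step (.proj true (.pair u v)) v
  | caseInl {B t u v} : Step (.case (.inl B t) u v) (subst 0 t u)
  | caseInr {A t u v} : Step (.case (.inr A t) u v) (subst 0 t v)
  | permApp {t u v w} :
      Step (.app (.case t u v) w) (.case t (.app u (shift 0 w)) (.app v (shift 0 w)))
  | permProj {b t u v} :
      Step (.proj b (.case t u v)) (.case t (.proj b u) (.proj b v))
  | permCase {t u v a b} :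
      Step (.case (.case t u v) a b)
        (.case t (.case u (shift 1 a) (shift 1 b)) (.case v (shift 1 a) (shift 1 b)))
  | congLam {A t t'} : Step t t' → Step (.lam A t) (.lam A t')
  | congAppL {t t' u} : Step t t' → Step (.app t u) (.app t' u)
  | congAppR {t u u'} : Step u u' → Step (.app t u) (.app t u')
  | congPairL {t t' u} : Step t t' → Step (.pair t u) (.pair t' u)
  | congPairR {t u u'} : Step u u' → Step (.pair t u) (.pair t u')
  | congProj {b t t'} : Step t t' → Step (.proj b t) (.proj b t')
  | congInl {B t t'} : Step t t' → Step (.inl B t) (.inl B t')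
  | congInr {A t t'} : Step t t' → Step (.inr A t) (.inr A t')
  | congCase₀ {t t' u v} : Step t t' → Step (.case t u v) (.case t' u v)
  | congCase₁ {t u u' v} : Step u u' → Step (.case t u v) (.case t u' v)
  | congCase₂ {t u v v'} : Step v v' → Step (.case t u v) (.case t u v')

/-- A normal form admits none of the reductions. -/
def NormalForm (t : Tm) : Prop := ∀ u, ¬ Step t u

/-! ### Parallel renaming and substitution -/

def liftR (ρ : ℕ → ℕ) : ℕ → ℕ
  | 0 => 0
  | n + 1 => ρ n + 1

def ren (ρ : ℕ → ℕ) : Tm → Tm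
  | .var n => .var (ρ n)
  | .lam A t => .lam A (ren (liftR ρ) t)
  | .app t u => .app (ren ρ t) (ren ρ u)
  | .pair t u => .pair (ren ρ t) (ren ρ u)
  | .proj b t => .proj b (ren ρ t)
  | .inl B t => .inl B (ren ρ t)
  | .inr A t => .inr A (ren ρ t)
  | .case t u v => .case (ren ρ t) (ren (liftR ρ) u) (ren (liftR ρ) v)

def liftS (σ : ℕ → Tm) : ℕ → Tm
  | 0 => .var 0
  | n + 1 => ren Nat.succ (σ n)

def sub (σ : ℕ → Tm) : Tm → Tm
  | .var n => σ n
  | .lam A t => .lam A (sub (liftS σ) t)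
  | .app t u => .app (sub σ t) (sub σ u)
  | .pair t u => .pair (sub σ t) (sub σ u)
  | .proj b t => .proj b (sub σ t)
  | .inl B t => .inl B (sub σ t)
  | .inr A t => .inr A (sub σ t)
  | .case t u v => .case (sub σ t) (sub (liftS σ) u) (sub (liftS σ) v)

def scons (a : Tm) (σ : ℕ → Tm) : ℕ → Tm
  | 0 => a
  | n + 1 => σ n

theorem liftR_comp (ρ ρ' : ℕ → ℕ) : liftR ρ ∘ liftR ρ' = liftR (ρ ∘ ρ') := by
  funext n; cases n <;> rfl

theorem ren_ren (ρ ρ' : ℕ → ℕ) (t : Tm) : ren ρ (ren ρ' t) = ren (ρ ∘ ρ') t := by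
  induction t generalizing ρ ρ' <;> simp_all [ren, liftR_comp]

theorem liftS_renS (σ : ℕ → Tm) (ρ : ℕ → ℕ) :
    (liftS σ) ∘ (liftR ρ) = liftS (σ ∘ ρ) := by
  funext n; cases n <;> rfl

theorem sub_ren (σ : ℕ → Tm) (ρ : ℕ → ℕ) (t : Tm) :
    sub σ (ren ρ t) = sub (σ ∘ ρ) t := by
  induction t generalizing σ ρ <;> simp_all [ren, sub, liftS_renS]

theorem liftS_ren (ρ : ℕ → ℕ) (σ : ℕ → Tm) :
    (ren (liftR ρ)) ∘ (liftS σ) = liftS (ren ρ ∘ σ) := by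
  funext n; cases n with
  | zero => rfl
  | succ n =>
      show ren (liftR ρ) (ren Nat.succ (σ n)) = ren Nat.succ (ren ρ (σ n))
      rw [ren_ren, ren_ren]; rfl

theorem ren_sub (ρ : ℕ → ℕ) (σ : ℕ → Tm) (t : Tm) :
    ren ρ (sub σ t) = sub (ren ρ ∘ σ) t := by
  induction t generalizing σ ρ <;> simp_all [ren, sub, liftS_ren]

theorem liftS_sub (σ τ : ℕ → Tm) :
    (sub (liftS σ)) ∘ (liftS τ) = liftS (sub σ ∘ τ) := by
  funext n; cases n with
  | zero => rfl
  | succ n =>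
      show sub (liftS σ) (ren Nat.succ (τ n)) = ren Nat.succ (sub σ (τ n))
      rw [sub_ren, ren_sub]; rfl

theorem sub_comp (σ τ : ℕ → Tm) (t : Tm) :
    sub σ (sub τ t) = sub (sub σ ∘ τ) t := by
  induction t generalizing σ τ <;> simp_all [sub, liftS_sub]

theorem liftS_var : liftS Tm.var = Tm.var := by funext n; cases n <;> rfl

theorem sub_id (t : Tm) : sub Tm.var t = t := by
  induction t <;> simp_all [sub, liftS_var]

theorem ren_eq_sub (ρ : ℕ → ℕ) (t : Tm) : ren ρ t = sub (Tm.var ∘ ρ) t := by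
  have : sub (Tm.var ∘ ρ) t = sub Tm.var (ren ρ t) := by rw [sub_ren]
  rw [this, sub_id]

/-- The `shift` from the statement as a renaming. -/
def shiftF (c : ℕ) : ℕ → ℕ := fun n => if n < c then n else n + 1

theorem liftR_shiftF (c : ℕ) : liftR (shiftF c) = shiftF (c + 1) := by
  funext n; cases n with
  | zero => simp [liftR, shiftF]
  | succ n => simp only [liftR, shiftF]; split <;> split <;> omega

theorem shift_eq_ren (c : ℕ) (t : Tm) : shift c t = ren (shiftF c) t := by
  induction t generalizing c with
  | var n => simp [shift, ren, shiftF]; split <;> rfl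
  | _ => simp_all [shift, ren, liftR_shiftF]

theorem shift0_eq (t : Tm) : shift 0 t = ren Nat.succ t := by
  rw [shift_eq_ren]; congr 1

theorem shiftF_one : shiftF 1 = liftR Nat.succ := by
  funext n; cases n <;> rfl

theorem shift1_eq (t : Tm) : shift 1 t = ren (liftR Nat.succ) t := by
  rw [shift_eq_ren, shiftF_one]

/-- The single-variable `subst` from the statement as a parallel substitution. -/
def substF (k : ℕ) (s : Tm) : ℕ → Tm := fun n =>
  if n < k then .var n else if n = k then s else .var (n - 1)

theorem liftS_substF (k : ℕ) (s : Tm) :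
    substF (k + 1) (shift 0 s) = liftS (substF k s) := by
  funext n; cases n with
  | zero => simp [substF, liftS]
  | succ n =>
      simp only [substF, liftS, shift0_eq]
      rcases lt_trichotomy n k with h | h | h
      · simp only [if_pos h, if_pos (Nat.succ_lt_succ h)]; rfl
      · simp [h]
      · have h1 : ¬ n < k := by omega
        have h2 : ¬ n = k := by omega
        have h3 : ¬ n + 1 < k + 1 := by omega
        have h4 : ¬ n + 1 = k + 1 := by omega
        simp [h1, h2, h3, h4, ren]; omega

theorem subst_eq_sub (k : ℕ) (s : Tm) (t : Tm) : subst k s t = sub (substF k s) t := by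
  induction t generalizing k s with
  | var n => simp [subst, sub, substF]
  | _ => simp_all [subst, sub, liftS_substF]

theorem subst0_eq (s t : Tm) : subst 0 s t = sub (scons s Tm.var) t := by
  rw [subst_eq_sub]; congr 1; funext n; cases n <;> simp [substF, scons]
/-! ### Normal forms -/

mutual
  /-- Spine-neutral normal terms: a variable applied to eliminations. -/
  inductive Sp : Tm → Prop
    | var (n : ℕ) : Sp (.var n)
    | app {t u} : Sp t → Nf u → Sp (.app t u)
    | proj {b t} : Sp t → Sp (.proj b t)

  /-- Normal terms. -/
  inductive Nf : Tm → Prop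
    | sp {t} : Sp t → Nf t
    | lam {A t} : Nf t → Nf (.lam A t)
    | pair {t u} : Nf t → Nf u → Nf (.pair t u)
    | inl {B t} : Nf t → Nf (.inl B t)
    | inr {A t} : Nf t → Nf (.inr A t)
    | case {t u v} : Sp t → Nf u → Nf v → Nf (.case t u v)
end

theorem Sp.not_lam {A b t} (h : Sp t) : t ≠ .lam A b := by cases h <;> simp
theorem Sp.not_pair {a b t} (h : Sp t) : t ≠ .pair a b := by cases h <;> simp
theorem Sp.not_inl {B a t} (h : Sp t) : t ≠ .inl B a := by cases h <;> simp
theorem Sp.not_inr {A a t} (h : Sp t) : t ≠ .inr A a := by cases h <;> simp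
theorem Sp.not_case {a b c t} (h : Sp t) : t ≠ .case a b c := by cases h <;> simp

theorem sp_app_inv {t u} (h : Sp (.app t u)) : Sp t ∧ Nf u := by
  cases h with | app h1 h2 => exact ⟨h1, h2⟩
theorem sp_proj_inv {b t} (h : Sp (.proj b t)) : Sp t := by
  cases h with | proj h1 => exact h1

theorem nf_lam_inv {A t} (h : Nf (.lam A t)) : Nf t := by
  cases h with
  | sp h1 => exact absurd rfl h1.not_lam
  | lam h1 => exact h1
theorem nf_pair_inv {t u} (h : Nf (.pair t u)) : Nf t ∧ Nf u := by
  cases h with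
  | sp h1 => exact absurd rfl h1.not_pair
  | pair h1 h2 => exact ⟨h1, h2⟩
theorem nf_inl_inv {B t} (h : Nf (.inl B t)) : Nf t := by
  cases h with
  | sp h1 => exact absurd rfl h1.not_inl
  | inl h1 => exact h1
theorem nf_inr_inv {A t} (h : Nf (.inr A t)) : Nf t := by
  cases h with
  | sp h1 => exact absurd rfl h1.not_inr
  | inr h1 => exact h1
theorem nf_case_inv {t u v} (h : Nf (.case t u v)) : Sp t ∧ Nf u ∧ Nf v := by
  cases h with
  | sp h1 => exact absurd rfl h1.not_case
  | case h1 h2 h3 => exact ⟨h1, h2, h3⟩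
theorem nf_app_inv {t u} (h : Nf (.app t u)) : Sp t ∧ Nf u := by
  cases h with
  | sp h1 => exact sp_app_inv h1
theorem nf_proj_inv {b t} (h : Nf (.proj b t)) : Sp t := by
  cases h with
  | sp h1 => exact sp_proj_inv h1

theorem nf_normal_aux : ∀ t : Tm, (Nf t → ∀ u, ¬ Step t u) := by
  intro t
  induction t with
  | var n => intro _ u hs; cases hs
  | lam A t ih =>
      intro h u hs
      cases hs with | congLam h' => exact ih (nf_lam_inv h) _ h'
  | app t v iht ihv =>
      intro h u hs
      obtain ⟨h1, h2⟩ := nf_app_inv h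
      cases hs with
      | beta => exact h1.not_lam rfl
      | permApp => exact h1.not_case rfl
      | congAppL h' => exact iht (Nf.sp h1) _ h'
      | congAppR h' => exact ihv h2 _ h'
  | pair t v iht ihv =>
      intro h u hs
      obtain ⟨h1, h2⟩ := nf_pair_inv h
      cases hs with
      | congPairL h' => exact iht h1 _ h'
      | congPairR h' => exact ihv h2 _ h'
  | proj b t ih =>
      intro h u hs
      have h1 := nf_proj_inv h
      cases hs with
      | projPairL => exact h1.not_pair rfl
      | projPairR => exact h1.not_pair rfl
      | permProj => exact h1.not_case rfl
      | congProj h' => exact ih (Nf.sp h1) _ h'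
  | inl B t ih =>
      intro h u hs
      cases hs with | congInl h' => exact ih (nf_inl_inv h) _ h'
  | inr A t ih =>
      intro h u hs
      cases hs with | congInr h' => exact ih (nf_inr_inv h) _ h'
  | case t a b iht iha ihb =>
      intro h u hs
      obtain ⟨h1, h2, h3⟩ := nf_case_inv h
      cases hs with
      | caseInl => exact h1.not_inl rfl
      | caseInr => exact h1.not_inr rfl
      | permCase => exact h1.not_case rfl
      | congCase₀ h' => exact iht (Nf.sp h1) _ h'
      | congCase₁ h' => exact iha h2 _ h'
      | congCase₂ h' => exact ihb h3 _ h'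

theorem nf_normal {t : Tm} (h : Nf t) : NormalForm t := nf_normal_aux t h

theorem nf_ren_aux : ∀ t : Tm, (∀ ρ, Sp t → Sp (ren ρ t)) ∧ (∀ ρ, Nf t → Nf (ren ρ t)) := by
  intro t
  induction t with
  | var n => exact ⟨fun ρ _ => Sp.var _, fun ρ _ => Nf.sp (Sp.var _)⟩
  | lam A t ih =>
      refine ⟨fun ρ h => absurd rfl h.not_lam, fun ρ h => ?_⟩
      exact Nf.lam (ih.2 _ (nf_lam_inv h))
  | app t v iht ihv =>
      have key : ∀ ρ, Sp (.app t v) → Sp (ren ρ (.app t v)) := by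
        intro ρ h
        obtain ⟨h1, h2⟩ := sp_app_inv h
        exact Sp.app (iht.1 ρ h1) (ihv.2 ρ h2)
      refine ⟨key, fun ρ h => ?_⟩
      obtain ⟨h1, h2⟩ := nf_app_inv h
      exact Nf.sp (key ρ (Sp.app h1 h2))
  | pair t v iht ihv =>
      refine ⟨fun ρ h => absurd rfl h.not_pair, fun ρ h => ?_⟩
      obtain ⟨h1, h2⟩ := nf_pair_inv h
      exact Nf.pair (iht.2 ρ h1) (ihv.2 ρ h2)
  | proj b t ih =>
      have key : ∀ ρ, Sp (.proj b t) → Sp (ren ρ (.proj b t)) := by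
        intro ρ h
        exact Sp.proj (ih.1 ρ (sp_proj_inv h))
      exact ⟨key, fun ρ h => Nf.sp (key ρ (Sp.proj (nf_proj_inv h)))⟩
  | inl B t ih =>
      refine ⟨fun ρ h => absurd rfl h.not_inl, fun ρ h => ?_⟩
      exact Nf.inl (ih.2 ρ (nf_inl_inv h))
  | inr A t ih =>
      refine ⟨fun ρ h => absurd rfl h.not_inr, fun ρ h => ?_⟩
      exact Nf.inr (ih.2 ρ (nf_inr_inv h))
  | case t a b iht iha ihb =>
      refine ⟨fun ρ h => absurd rfl h.not_case, fun ρ h => ?_⟩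
      obtain ⟨h1, h2, h3⟩ := nf_case_inv h
      exact Nf.case (iht.1 ρ h1) (iha.2 _ h2) (ihb.2 _ h3)

theorem sp_ren {t} (h : Sp t) (ρ : ℕ → ℕ) : Sp (ren ρ t) := (nf_ren_aux t).1 ρ h
theorem nf_ren {t} (h : Nf t) (ρ : ℕ → ℕ) : Nf (ren ρ t) := (nf_ren_aux t).2 ρ h

/-! ### Steps commute with renaming -/

theorem ren_subst0 (ρ : ℕ → ℕ) (s t : Tm) :
    ren ρ (subst 0 s t) = subst 0 (ren ρ s) (ren (liftR ρ) t) := by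
  rw [subst0_eq, subst0_eq, ren_sub, sub_ren]
  congr 1; funext n; cases n with
  | zero => rfl
  | succ n => rfl

theorem ren_shift0 (ρ : ℕ → ℕ) (w : Tm) :
    ren (liftR ρ) (shift 0 w) = shift 0 (ren ρ w) := by
  rw [shift0_eq, shift0_eq, ren_ren, ren_ren]; rfl

theorem ren_shift1 (ρ : ℕ → ℕ) (a : Tm) :
    ren (liftR (liftR ρ)) (shift 1 a) = shift 1 (ren (liftR ρ) a) := by
  rw [shift1_eq, shift1_eq, ren_ren, ren_ren]
  congr 1; funext n; cases n <;> rfl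

theorem step_ren {t u} (h : Step t u) : ∀ ρ, Step (ren ρ t) (ren ρ u) := by
  induction h with
  | @beta A t u =>
      intro ρ
      have := @Step.beta A (ren (liftR ρ) t) (ren ρ u)
      rw [← ren_subst0] at this
      exact this
  | projPairL => intro ρ; exact Step.projPairL
  | projPairR => intro ρ; exact Step.projPairR
  | @caseInl B t u v =>
      intro ρ
      have := @Step.caseInl B (ren ρ t) (ren (liftR ρ) u) (ren (liftR ρ) v)
      rw [← ren_subst0] at this
      exact this
  | @caseInr A t u v =>
      intro ρ
      have := @Step.caseInr A (ren ρ t) (ren (liftR ρ) u) (ren (liftR ρ) v)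
      rw [← ren_subst0] at this
      exact this
  | @permApp t u v w =>
      intro ρ
      have := @Step.permApp (ren ρ t) (ren (liftR ρ) u) (ren (liftR ρ) v) (ren ρ w)
      rw [← ren_shift0] at this
      exact this
  | permProj => intro ρ; exact Step.permProj
  | @permCase t u v a b =>
      intro ρ
      have := @Step.permCase (ren ρ t) (ren (liftR ρ) u) (ren (liftR ρ) v)
        (ren (liftR ρ) a) (ren (liftR ρ) b)
      rw [← ren_shift1, ← ren_shift1] at this
      exact this
  | congLam _ ih => intro ρ; exact Step.congLam (ih _)
  | congAppL _ ih => intro ρ; exact Step.congAppL (ih _)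
  | congAppR _ ih => intro ρ; exact Step.congAppR (ih _)
  | congPairL _ ih => intro ρ; exact Step.congPairL (ih _)
  | congPairR _ ih => intro ρ; exact Step.congPairR (ih _)
  | congProj _ ih => intro ρ; exact Step.congProj (ih _)
  | congInl _ ih => intro ρ; exact Step.congInl (ih _)
  | congInr _ ih => intro ρ; exact Step.congInr (ih _)
  | congCase₀ _ ih => intro ρ; exact Step.congCase₀ (ih _)
  | congCase₁ _ ih => intro ρ; exact Step.congCase₁ (ih _)
  | congCase₂ _ ih => intro ρ; exact Step.congCase₂ (ih _)

/-! ### Many-step reduction -/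

abbrev Steps (t u : Tm) : Prop := Relation.ReflTransGen Step t u

theorem steps_lift (f : Tm → Tm) (hf : ∀ a b, Step a b → Step (f a) (f b))
    {t u} (h : Steps t u) : Steps (f t) (f u) :=
  Relation.ReflTransGen.lift f hf _ _ h

theorem steps_ren {t u} (h : Steps t u) (ρ : ℕ → ℕ) : Steps (ren ρ t) (ren ρ u) :=
  steps_lift (ren ρ) (fun _ _ hs => step_ren hs ρ) h

theorem steps_congLam {A t t'} (h : Steps t t') : Steps (.lam A t) (.lam A t') :=
  steps_lift (.lam A) (fun _ _ => .congLam) h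
theorem steps_congAppL {t t' u} (h : Steps t t') : Steps (.app t u) (.app t' u) :=
  steps_lift (.app · u) (fun _ _ => .congAppL) h
theorem steps_congAppR {t u u'} (h : Steps u u') : Steps (.app t u) (.app t u') :=
  steps_lift (.app t ·) (fun _ _ => .congAppR) h
theorem steps_congPair {t t' u u'} (h : Steps t t') (h' : Steps u u') :
    Steps (.pair t u) (.pair t' u') :=
  .trans (steps_lift (.pair · u) (fun _ _ => .congPairL) h)
    (steps_lift (.pair t' ·) (fun _ _ => .congPairR) h')
theorem steps_congProj {b t t'} (h : Steps t t') : Steps (.proj b t) (.proj b t') :=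
  steps_lift (.proj b) (fun _ _ => .congProj) h
theorem steps_congInl {B t t'} (h : Steps t t') : Steps (.inl B t) (.inl B t') :=
  steps_lift (.inl B) (fun _ _ => .congInl) h
theorem steps_congInr {A t t'} (h : Steps t t') : Steps (.inr A t) (.inr A t') :=
  steps_lift (.inr A) (fun _ _ => .congInr) h
theorem steps_congCase₀ {t t' u v} (h : Steps t t') : Steps (.case t u v) (.case t' u v) :=
  steps_lift (.case · u v) (fun _ _ => .congCase₀) h
theorem steps_congCase {t t' u u' v v'} (h : Steps t t') (h1 : Steps u u')
    (h2 : Steps v v') : Steps (.case t u v) (.case t' u' v') :=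
  .trans (steps_lift (.case · u v) (fun _ _ => .congCase₀) h)
    (.trans (steps_lift (.case t' · v) (fun _ _ => .congCase₁) h1)
      (steps_lift (.case t' u' ·) (fun _ _ => .congCase₂) h2))

/-- Weak normalization of a term. -/
def WN (t : Tm) : Prop := ∃ u, Steps t u ∧ Nf u

theorem wn_ren {t} (h : WN t) (ρ : ℕ → ℕ) : WN (ren ρ t) := by
  obtain ⟨u, h1, h2⟩ := h
  exact ⟨ren ρ u, steps_ren h1 ρ, nf_ren h2 ρ⟩

theorem wn_expand {t t'} (h : Steps t t') (h' : WN t') : WN t := by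
  obtain ⟨u, h1, h2⟩ := h'
  exact ⟨u, h.trans h1, h2⟩
/-! ### Reducibility -/

theorem ren_id (t : Tm) : ren id t = t := by
  rw [ren_eq_sub]
  have : Tm.var ∘ id = Tm.var := rfl
  rw [this, sub_id]

theorem liftR_id : liftR id = id := by funext n; cases n <;> rfl

/-- Good scrutinees at sum type. -/
inductive SG (RA RB : Tm → Prop) : Tm → Prop
  | inl {B a} : RA a → SG RA RB (.inl B a)
  | inr {A b} : RB b → SG RA RB (.inr A b)
  | ne {n} : Sp n → SG RA RB n
  | case {n p q} : Sp n → SG RA RB p → SG RA RB q → SG RA RB (.case n p q)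

/-- The reducibility predicate. -/
def R : Ty → Tm → Prop
  | .base, t => WN t
  | .arrow A B, t => WN t ∧ ∀ (ρ : ℕ → ℕ) u, R A u → R B (.app (ren ρ t) u)
  | .prod A B, t => WN t ∧ R A (.proj false t) ∧ R B (.proj true t)
  | .sum A B, t => ∃ t', Steps t t' ∧ SG (R A) (R B) t'

theorem sg_ren {RA RB : Tm → Prop} (hA : ∀ ρ a, RA a → RA (ren ρ a))
    (hB : ∀ ρ b, RB b → RB (ren ρ b)) {t} (h : SG RA RB t) :
    ∀ ρ, SG RA RB (ren ρ t) := by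
  induction h with
  | inl ha => exact fun ρ => SG.inl (hA _ _ ha)
  | inr hb => exact fun ρ => SG.inr (hB _ _ hb)
  | ne hn => exact fun ρ => SG.ne (sp_ren hn ρ)
  | case hn _ _ ihp ihq => exact fun ρ => SG.case (sp_ren hn ρ) (ihp _) (ihq _)

theorem r_ren {A : Ty} : ∀ {t}, R A t → ∀ ρ, R A (ren ρ t) := by
  induction A with
  | base => exact fun h ρ => wn_ren h ρ
  | arrow A B ihA ihB =>
      intro t h ρ
      obtain ⟨h1, h2⟩ := h
      refine ⟨wn_ren h1 ρ, fun ρ' u hu => ?_⟩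
      rw [ren_ren]
      exact h2 _ u hu
  | prod A B ihA ihB =>
      intro t h ρ
      obtain ⟨h1, h2, h3⟩ := h
      exact ⟨wn_ren h1 ρ, ihA h2 ρ, ihB h3 ρ⟩
  | sum A B ihA ihB =>
      intro t h ρ
      obtain ⟨t', h1, h2⟩ := h
      exact ⟨ren ρ t', steps_ren h1 ρ, sg_ren (fun ρ a => (ihA · ρ)) (fun ρ b => (ihB · ρ)) h2 ρ⟩

theorem r_expand {A : Ty} : ∀ {t t'}, Step t t' → R A t' → R A t := by
  induction A with
  | base => exact fun hs h => wn_expand (Relation.ReflTransGen.single hs) h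
  | arrow A B ihA ihB =>
      intro t t' hs h
      obtain ⟨h1, h2⟩ := h
      refine ⟨wn_expand (Relation.ReflTransGen.single hs) h1, fun ρ u hu => ?_⟩
      exact ihB (Step.congAppL (step_ren hs ρ)) (h2 ρ u hu)
  | prod A B ihA ihB =>
      intro t t' hs h
      obtain ⟨h1, h2, h3⟩ := h
      exact ⟨wn_expand (Relation.ReflTransGen.single hs) h1,
        ihA (Step.congProj hs) h2, ihB (Step.congProj hs) h3⟩
  | sum A B ihA ihB =>
      intro t t' hs h
      obtain ⟨t'', h1, h2⟩ := h
      exact ⟨t'', Relation.ReflTransGen.head hs h1, h2⟩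

theorem r_expand_star {A : Ty} {t t'} (hs : Steps t t') (h : R A t') : R A t := by
  induction hs using Relation.ReflTransGen.head_induction_on with
  | refl => exact h
  | head h1 _ ih => exact r_expand h1 ih

theorem sg_wn {RA RB : Tm → Prop} (hA : ∀ a, RA a → WN a) (hB : ∀ b, RB b → WN b)
    {t} (h : SG RA RB t) : ∃ n, Steps t n ∧ Nf n := by
  induction h with
  | @inl B a ha =>
      obtain ⟨a', h1, h2⟩ := hA a ha
      exact ⟨.inl B a', steps_congInl h1, Nf.inl h2⟩
  | @inr A b hb =>
      obtain ⟨b', h1, h2⟩ := hB b hb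
      exact ⟨.inr A b', steps_congInr h1, Nf.inr h2⟩
  | ne hn => exact ⟨_, Relation.ReflTransGen.refl, Nf.sp hn⟩
  | @case n p q hn _ _ ihp ihq =>
      obtain ⟨p', hp1, hp2⟩ := ihp
      obtain ⟨q', hq1, hq2⟩ := ihq
      exact ⟨.case n p' q', steps_congCase Relation.ReflTransGen.refl hp1 hq1,
        Nf.case hn hp2 hq2⟩

theorem r_wn {A : Ty} : ∀ {t}, R A t → WN t := by
  induction A with
  | base => exact fun h => h
  | arrow A B ihA ihB => exact fun h => h.1
  | prod A B ihA ihB => exact fun h => h.1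
  | sum A B ihA ihB =>
      intro t h
      obtain ⟨t', h1, h2⟩ := h
      obtain ⟨n, h3, h4⟩ := sg_wn (fun a ha => ihA ha) (fun b hb => ihB hb) h2
      exact ⟨n, h1.trans h3, h4⟩

theorem sp_r {A : Ty} : ∀ {n}, Sp n → R A n := by
  induction A with
  | base => exact fun hn => ⟨_, Relation.ReflTransGen.refl, Nf.sp hn⟩
  | arrow A B ihA ihB =>
      intro n hn
      refine ⟨⟨_, Relation.ReflTransGen.refl, Nf.sp hn⟩, fun ρ u hu => ?_⟩
      obtain ⟨u', h1, h2⟩ := r_wn hu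
      refine r_expand_star (steps_congAppR h1) ?_
      exact ihB (Sp.app (sp_ren hn ρ) h2)
  | prod A B ihA ihB =>
      intro n hn
      exact ⟨⟨_, Relation.ReflTransGen.refl, Nf.sp hn⟩, ihA (Sp.proj hn), ihB (Sp.proj hn)⟩
  | sum A B ihA ihB =>
      intro n hn
      exact ⟨n, Relation.ReflTransGen.refl, SG.ne hn⟩

/-- Case with spine-neutral scrutinee and reducible branches is reducible. -/
theorem case_sp {C : Ty} : ∀ {n U V}, Sp n → R C U → R C V → R C (.case n U V) := by
  induction C with
  | base =>
      intro n U V hn hU hV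
      obtain ⟨U', hU1, hU2⟩ := hU
      obtain ⟨V', hV1, hV2⟩ := hV
      exact ⟨.case n U' V', steps_congCase Relation.ReflTransGen.refl hU1 hV1,
        Nf.case hn hU2 hV2⟩
  | arrow D E ihD ihE =>
      intro n U V hn hU hV
      have wn : WN (.case n U V) := by
        obtain ⟨U', hU1, hU2⟩ := r_wn hU
        obtain ⟨V', hV1, hV2⟩ := r_wn hV
        exact ⟨.case n U' V', steps_congCase Relation.ReflTransGen.refl hU1 hV1,
          Nf.case hn hU2 hV2⟩
      refine ⟨wn, fun ρ u hu => ?_⟩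
      show R E (.app (.case (ren ρ n) (ren (liftR ρ) U) (ren (liftR ρ) V)) u)
      refine r_expand Step.permApp ?_
      refine ihE (sp_ren hn ρ) ?_ ?_
      · exact hU.2 (liftR ρ) (shift 0 u) (by rw [shift0_eq]; exact r_ren hu _)
      · exact hV.2 (liftR ρ) (shift 0 u) (by rw [shift0_eq]; exact r_ren hu _)
  | prod D E ihD ihE =>
      intro n U V hn hU hV
      have wn : WN (.case n U V) := by
        obtain ⟨U', hU1, hU2⟩ := r_wn hU
        obtain ⟨V', hV1, hV2⟩ := r_wn hV
        exact ⟨.case n U' V', steps_congCase Relation.ReflTransGen.refl hU1 hV1,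
          Nf.case hn hU2 hV2⟩
      refine ⟨wn, ?_, ?_⟩
      · exact r_expand Step.permProj (ihD hn hU.2.1 hV.2.1)
      · exact r_expand Step.permProj (ihE hn hU.2.2 hV.2.2)
  | sum D E ihD ihE =>
      intro n U V hn hU hV
      obtain ⟨U', hU1, hU2⟩ := hU
      obtain ⟨V', hV1, hV2⟩ := hV
      exact ⟨.case n U' V', steps_congCase Relation.ReflTransGen.refl hU1 hV1,
        SG.case hn hU2 hV2⟩

/-! ### Good branches -/

/-- A good branch for scrutinee predicate `RA` and result type `C`. -/
def GB (RA : Tm → Prop) (C : Ty) (U : Tm) : Prop :=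
  ∀ (ρ : ℕ → ℕ) a, RA a → R C (subst 0 a (ren (liftR ρ) U))

theorem gb_ren {RA C U} (h : GB RA C U) (ρ' : ℕ → ℕ) : GB RA C (ren (liftR ρ') U) := by
  intro ρ a ha
  rw [ren_ren, liftR_comp]
  exact h (ρ ∘ ρ') a ha

theorem subst0_var0_ren (U : Tm) : subst 0 (.var 0) (ren (liftR Nat.succ) U) = U := by
  rw [subst0_eq, sub_ren]
  have : (scons (Tm.var 0) Tm.var) ∘ (liftR Nat.succ) = Tm.var := by
    funext n; cases n <;> rfl
  rw [this, sub_id]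

theorem gb_self {A : Ty} {C U} (h : GB (R A) C U) : R C U := by
  have := h Nat.succ (.var 0) (sp_r (Sp.var 0))
  rwa [subst0_var0_ren] at this
/-! ### Case elimination -/

theorem case_elim {A B C : Ty} : ∀ {t'}, SG (R A) (R B) t' →
    ∀ U V, GB (R A) C U → GB (R B) C V → R C (.case t' U V) := by
  intro t' h
  induction h with
  | inl ha =>
      intro U V hU hV
      refine r_expand Step.caseInl ?_
      have := hU id _ ha
      rwa [liftR_id, ren_id] at this
  | inr hb =>
      intro U V hU hV
      refine r_expand Step.caseInr ?_
      have := hV id _ hb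
      rwa [liftR_id, ren_id] at this
  | ne hn =>
      intro U V hU hV
      exact case_sp hn (gb_self hU) (gb_self hV)
  | case hn _ _ ihp ihq =>
      intro U V hU hV
      refine r_expand Step.permCase ?_
      have hU' : GB (R A) C (shift 1 U) := by rw [shift1_eq]; exact gb_ren hU _
      have hV' : GB (R B) C (shift 1 V) := by rw [shift1_eq]; exact gb_ren hV _
      exact case_sp hn (ihp _ _ hU' hV') (ihq _ _ hU' hV')

theorem case_r {A B C : Ty} {t U V} (h : R (.sum A B) t)
    (hU : GB (R A) C U) (hV : GB (R B) C V) : R C (.case t U V) := by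
  obtain ⟨t', h1, h2⟩ := h
  exact r_expand_star (steps_congCase₀ h1) (case_elim h2 U V hU hV)

/-! ### The fundamental lemma -/

theorem sub_lift_ren (σ : ℕ → Tm) (ρ : ℕ → ℕ) (a u : Tm) :
    subst 0 a (ren (liftR ρ) (sub (liftS σ) u)) =
      sub (scons a (fun n => ren ρ (σ n))) u := by
  rw [subst0_eq, ren_sub, sub_comp]
  congr 1; funext n
  cases n with
  | zero => rfl
  | succ n =>
      show sub (scons a Tm.var) (ren (liftR ρ) (ren Nat.succ (σ n))) = ren ρ (σ n)
      rw [ren_ren]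
      have h1 : liftR ρ ∘ Nat.succ = Nat.succ ∘ ρ := funext fun n => rfl
      rw [h1, ← ren_ren, sub_ren]
      have h2 : (scons a Tm.var) ∘ Nat.succ = Tm.var := funext fun n => rfl
      rw [h2, sub_id]

/-- A substitution whose entries are reducible at the types of the context. -/
def GoodSub (Γ : List Ty) (σ : ℕ → Tm) : Prop :=
  ∀ n A, Γ[n]? = some A → R A (σ n)

theorem good_cons {Γ σ A a} (ha : R A a) (hσ : GoodSub Γ σ) :
    GoodSub (A :: Γ) (scons a σ) := by
  intro n B hn
  cases n with
  | zero => simp at hn; subst hn; exact ha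
  | succ n => simp at hn; exact hσ n B hn

theorem good_ren {Γ σ} (hσ : GoodSub Γ σ) (ρ : ℕ → ℕ) :
    GoodSub Γ (fun n => ren ρ (σ n)) := fun n B hn => r_ren (hσ n B hn) ρ

theorem good_lift {Γ σ A} (hσ : GoodSub Γ σ) : GoodSub (A :: Γ) (liftS σ) := by
  intro n B hn
  cases n with
  | zero => simp at hn; subst hn; exact sp_r (Sp.var 0)
  | succ n =>
      simp at hn
      exact r_ren (hσ n B hn) Nat.succ

theorem fund {Γ t A} (h : HasTy Γ t A) : ∀ σ, GoodSub Γ σ → R A (sub σ t) := by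
  induction h with
  | var hn => intro σ hσ; exact hσ _ _ hn
  | @lam Γ A B b _ ih =>
      intro σ hσ
      have hbody : R B (sub (liftS σ) b) := ih _ (good_lift hσ)
      constructor
      · obtain ⟨b', h1, h2⟩ := r_wn hbody
        exact ⟨.lam A b', steps_congLam h1, Nf.lam h2⟩
      · intro ρ u hu
        show R B (.app (.lam A (ren (liftR ρ) (sub (liftS σ) b))) u)
        refine r_expand Step.beta ?_
        rw [sub_lift_ren]
        exact ih _ (good_cons hu (good_ren hσ ρ))
  | app _ _ iht ihu =>
      intro σ hσ
      have h1 := (iht σ hσ).2 id _ (ihu σ hσ)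
      rwa [ren_id] at h1
  | pair _ _ iht ihu =>
      intro σ hσ
      have ht := iht σ hσ
      have hu := ihu σ hσ
      refine ⟨?_, ?_, ?_⟩
      · obtain ⟨t', h1, h2⟩ := r_wn ht
        obtain ⟨u', h3, h4⟩ := r_wn hu
        exact ⟨.pair t' u', steps_congPair h1 h3, Nf.pair h2 h4⟩
      · exact r_expand Step.projPairL ht
      · exact r_expand Step.projPairR hu
  | projL _ ih => intro σ hσ; exact (ih σ hσ).2.1
  | projR _ ih => intro σ hσ; exact (ih σ hσ).2.2
  | inl _ ih =>
      intro σ hσ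
      exact ⟨_, Relation.ReflTransGen.refl, SG.inl (ih σ hσ)⟩
  | inr _ ih =>
      intro σ hσ
      exact ⟨_, Relation.ReflTransGen.refl, SG.inr (ih σ hσ)⟩
  | case _ _ _ iht ihu ihv =>
      intro σ hσ
      refine case_r (iht σ hσ) ?_ ?_
      · intro ρ a ha
        rw [sub_lift_ren]
        exact ihu _ (good_cons ha (good_ren hσ ρ))
      · intro ρ a ha
        rw [sub_lift_ren]
        exact ihv _ (good_cons ha (good_ren hσ ρ))
/-- Weak normalization: every well-typed term reduces in finitely many steps to a
normal form. -/
theorem weak_normalization {Γ : List Ty} {t : Tm} {A : Ty} (h : HasTy Γ t A) :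
    ∃ u, Relation.ReflTransGen Step t u ∧ NormalForm u := by
  have hgood : GoodSub Γ Tm.var := fun n B _ => sp_r (Sp.var n)
  have hr := fund h Tm.var hgood
  rw [sub_id] at hr
  obtain ⟨u, h1, h2⟩ := r_wn hr
  exact ⟨u, h1, nf_normal h2⟩
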